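/- Properties of the excitation-transport structure of the toric-code corrections: (a) for every non-starred generator j ∈ 𝒮 \ {p*, v*}, the correction anticommutes with its own stabilizer, C_j S_j = −S_j C_j; (b) for all j, k ∈ 𝒮 \ {p*, v*} with k ≠ j, if C_k S_j = −S_j C_k then f(k) ≥ f(j) + 1; (c) for every k ∈ 𝒮, there is at most one j ∈ 𝒮 with j ≠ k and C_k S_j = −S_j C_k (i.e., m = 1 for the toric code). -/

import Mathlib

open scoped Matrix ComplexOrder

attribute [local instance] Matrix.normedAddCommGroup Matrix.normedSpace

namespace Toric

variable (L : ℕ) [NeZero L]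

/-- Vertices of the periodic `L × L` lattice. -/
abbrev V := ZMod L × ZMod L

/-- Edges: `(v, 0)` is the horizontal edge from `v` to `v + (1,0)`,
`(v, 1)` the vertical edge from `v` to `v + (0,1)`. -/
abbrev E := V L × Fin 2

/-- Operators on the `2L²` qubits: complex matrices indexed by `E → Fin 2`. -/
abbrev Op := Matrix (E L → Fin 2) (E L → Fin 2) ℂ

/-- Pauli `X` on edge `e`. -/
noncomputable def Xop (e : E L) : Op L := fun σ τ =>
  if τ e = 1 - σ e ∧ ∀ e' ≠ e, τ e' = σ e' then 1 else 0

/-- Pauli `Z` on edge `e`. -/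
noncomputable def Zop (e : E L) : Op L :=
  Matrix.diagonal fun σ => (-1 : ℂ) ^ (σ e : ℕ)

/-- Vertex stabilizer at `v`. -/
noncomputable def Sv (v : V L) : Op L :=
  Xop L (v, 0) * Xop L (v, 1) * Xop L (v - (1, 0), 0) * Xop L (v - (0, 1), 1)

/-- Plaquette stabilizer with south-west corner `v`. -/
noncomputable def Sp (v : V L) : Op L :=
  Zop L (v, 0) * Zop L (v, 1) * Zop L (v + (1, 0), 1) * Zop L (v + (0, 1), 0)

/-- Index set of stabilizer generators: `inl v` is the vertex generator at `v`,
`inr v` is the plaquette generator `p(v)`. -/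
abbrev Gen := V L ⊕ V L

/-- The stabilizer associated with a generator index. -/
noncomputable def stab : Gen L → Op L
  | Sum.inl v => Sv L v
  | Sum.inr v => Sp L v

/-- The starred vertex `v* = (1,1)`. -/
def vStar : Gen L := Sum.inl (1, 1)

/-- The starred plaquette `p* = p(0,0)`. -/
def pStar : Gen L := Sum.inr (0, 0)

/-- The correction operators. -/
noncomputable def corr : Gen L → Op L
  | Sum.inl (r, s) =>
      if (r, s) = ((1 : ZMod L), (1 : ZMod L)) then 1
      else if s ≠ 1 then Zop L ((r, s - 1), 1)
      else Zop L ((r - 1, 1), 0)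
  | Sum.inr (r, s) =>
      if (r, s) = ((0 : ZMod L), (0 : ZMod L)) then 1
      else if s ≠ 0 then Xop L ((r, s + 1), 0)
      else Xop L ((r + 1, 0), 1)

/-- `P_j^+ = (I + S_j)/2`. -/
noncomputable def Pplus (j : Gen L) : Op L := (2⁻¹ : ℂ) • (1 + stab L j)

/-- `P_j^- = (I - S_j)/2`. -/
noncomputable def Pminus (j : Gen L) : Op L := (2⁻¹ : ℂ) • (1 - stab L j)

/-- The correction channel `T_j(ρ) = P_j⁺ ρ P_j⁺ + C_j P_j⁻ ρ P_j⁻ C_j†` as a linear map. -/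
noncomputable def Tj (j : Gen L) : Op L →ₗ[ℂ] Op L :=
  LinearMap.comp (LinearMap.mulLeft ℂ (Pplus L j)) (LinearMap.mulRight ℂ (Pplus L j)) +
  LinearMap.comp (LinearMap.mulLeft ℂ (corr L j * Pminus L j))
    (LinearMap.mulRight ℂ (Pminus L j * (corr L j)ᴴ))

/-- The Liouvillian `L(ρ) = Σ_j (T_j(ρ) - ρ)`. -/
noncomputable def Liou : Op L →ₗ[ℂ] Op L :=
  ∑ j : Gen L, (Tj L j - LinearMap.id)

/-- The evolution `e^{tL}`. -/
noncomputable def expL (t : ℝ) : Op L →L[ℂ] Op L :=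
  @NormedSpace.exp _ _ _ (@NonUnitalSeminormedRing.toIsTopologicalRing (Op L →L[ℂ] Op L)
    (@ContinuousLinearMap.toNormedRing ℂ (Op L) _ _ _).toNonUnitalNormedRing.toNonUnitalSeminormedRing)
    ((t : ℂ) • (Liou L).toContinuousLinearMap)

/-- Product of a finite family of (commuting) operators, taken in some fixed enumeration order. -/
noncomputable def listProd {ι : Type*} [Fintype ι] (f : ι → Op L) : Op L :=
  ((Finset.univ : Finset ι).toList.map f).prod

/-- Logical `X̄₁`. -/
noncomputable def X1bar : Op L := listProd L fun s : ZMod L => Xop L ((0, s), 0)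

/-- Logical `Z̄₁`. -/
noncomputable def Z1bar : Op L := listProd L fun r : ZMod L => Zop L ((r, 1), 0)

/-- Logical `X̄₂`. -/
noncomputable def X2bar : Op L := listProd L fun r : ZMod L => Xop L ((r, 0), 1)

/-- Logical `Z̄₂`. -/
noncomputable def Z2bar : Op L := listProd L fun s : ZMod L => Zop L ((1, s), 1)

/-- The single-qubit Pauli matrices `I, X, Y, Z`. -/
noncomputable def pauli : Fin 4 → Matrix (Fin 2) (Fin 2) ℂ :=
  ![1, !![0, 1; 1, 0], !![0, -Complex.I; Complex.I, 0], !![1, 0; 0, -1]]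

/-- Logical counterparts `Ī, X̄₁, Ȳ₁, Z̄₁` on the first logical qubit. -/
noncomputable def logical1 : Fin 4 → Op L :=
  ![1, X1bar L, Complex.I • (X1bar L * Z1bar L), Z1bar L]

/-- Logical counterparts `Ī, X̄₂, Ȳ₂, Z̄₂` on the second logical qubit. -/
noncomputable def logical2 : Fin 4 → Op L :=
  ![1, X2bar L, Complex.I • (X2bar L * Z2bar L), Z2bar L]

/-- Logical counterpart `P̄ = P̄₁ P̄₂` of the two-qubit Pauli indexed by `(a, b)`. -/
noncomputable def logicalP (a b : Fin 4) : Op L := logical1 L a * logical2 L b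

/-- `⟨Ψ| P₁ ⊗ P₂ |Ψ⟩` for the two-qubit Pauli indexed by `(a, b)`. -/
noncomputable def expval (Ψ : Fin 2 → Fin 2 → ℂ) (a b : Fin 4) : ℂ :=
  ∑ x : Fin 2, ∑ x' : Fin 2, ∑ y : Fin 2, ∑ y' : Fin 2,
    (starRingEnd ℂ) (Ψ x y) * pauli a x x' * pauli b y y' * Ψ x' y'

/-- The qubit `A₁`. -/
def A1 : E L := (((0 : ZMod L), (1 : ZMod L)), 0)

/-- The qubit `A₂`. -/
def A2 : E L := (((1 : ZMod L), (0 : ZMod L)), 1)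

/-- The qubits `B = {((0,s),0) : s ≠ 1}`. -/
def Bfin : Finset (E L) :=
  (Finset.univ.filter fun s : ZMod L => s ≠ 1).image fun s => (((0 : ZMod L), s), (0 : Fin 2))

/-- The qubits `C = {((r,1),0) : r ≠ 0}`. -/
def Cfin : Finset (E L) :=
  (Finset.univ.filter fun r : ZMod L => r ≠ 0).image fun r => ((r, (1 : ZMod L)), (0 : Fin 2))

/-- The qubits `B' = {((r,0),1) : r ≠ 1}`. -/
def B'fin : Finset (E L) :=
  (Finset.univ.filter fun r : ZMod L => r ≠ 1).image fun r => ((r, (0 : ZMod L)), (1 : Fin 2))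

/-- The qubits `C' = {((1,s),1) : s ≠ 0}`. -/
def C'fin : Finset (E L) :=
  (Finset.univ.filter fun s : ZMod L => s ≠ 0).image fun s => (((1 : ZMod L), s), (1 : Fin 2))

/-- The remaining qubits `D`. -/
def Dfin : Finset (E L) :=
  Finset.univ \ ({A1 L, A2 L} ∪ Bfin L ∪ B'fin L ∪ Cfin L ∪ C'fin L)

/-- The initial state `ρ₀`: `|Ψ⟩⟨Ψ|` on `A₁A₂`, `|+⟩⟨+|` on `B ∪ B'`, `|0⟩⟨0|` on `C ∪ C'`,
and the arbitrary state `ρ_D` on the remaining qubits `D`. -/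
noncomputable def rho0 (Ψ : Fin 2 → Fin 2 → ℂ)
    (ρD : Matrix ({e // e ∈ Dfin L} → Fin 2) ({e // e ∈ Dfin L} → Fin 2) ℂ) : Op L :=
  fun σ τ =>
    Ψ (σ (A1 L)) (σ (A2 L)) * (starRingEnd ℂ) (Ψ (τ (A1 L)) (τ (A2 L))) *
    (∏ _e ∈ Bfin L ∪ B'fin L, (2⁻¹ : ℂ)) *
    (∏ e ∈ Cfin L ∪ C'fin L, if σ e = 0 ∧ τ e = 0 then (1 : ℂ) else 0) *
    ρD (fun d => σ d.1) (fun d => τ d.1)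

/-- The projection `Q` onto the code space. -/
noncomputable def Qproj : Op L := listProd L fun j : Gen L => Pplus L j

/-- The projection `Q⊥ = I - Q` onto the orthogonal complement of the code space. -/
noncomputable def Qperp : Op L := 1 - Qproj L

end Toric

/-- The trace norm `‖A‖₁ = tr √(AᴴA)`. -/
noncomputable def traceNorm {m : Type*} [Fintype m] [DecidableEq m] (A : Matrix m m ℂ) : ℝ :=
  (((Matrix.posSemidef_conjTranspose_mul_self A).1.eigenvectorUnitary.1 *
    Matrix.diagonal (((↑) : ℝ → ℂ) ∘ (√·) ∘ (Matrix.posSemidef_conjTranspose_mul_self A).1.eigenvalues) *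
    (star (Matrix.posSemidef_conjTranspose_mul_self A).1.eigenvectorUnitary : Matrix m m ℂ)).trace).re

namespace Toric

/-- The axial-distance function `f` on generators: `f(p(r,s)) = ((−r) mod L) + ((−s) mod L) − 1`
for plaquettes and `f(v) = ((r−1) mod L) + ((s−1) mod L) − 1` for vertices `v = (r,s)`
(the values at the starred generators `p*`, `v*` are irrelevant below). -/
def axf (L : ℕ) [NeZero L] : Gen L → ℤ
  | Sum.inl (r, s) => ((r - 1).val : ℤ) + ((s - 1).val : ℤ) - 1
  | Sum.inr (r, s) => ((-r).val : ℤ) + ((-s).val : ℤ) - 1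

end Toric


namespace Toric

set_option linter.unusedSectionVars false

section Aux

variable (L : ℕ) [NeZero L]

/-- Flip the bit at edge `e`. -/
def flip (σ : E L → Fin 2) (e : E L) : E L → Fin 2 := Function.update σ e (1 - σ e)

lemma Xop_eq (e : E L) : Xop L e = fun σ τ => if τ = flip L σ e then 1 else 0 := by
  funext σ τ
  simp [Xop, flip, Function.eq_update_iff]

lemma one_sub_one_sub (x : Fin 2) : 1 - (1 - x) = x := by fin_cases x <;> decide

lemma flip_flip (σ : E L → Fin 2) (e : E L) : flip L (flip L σ e) e = σ := by
  funext e'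
  by_cases h : e' = e
  · subst h; simp [flip, one_sub_one_sub]
  · simp [flip, Function.update_of_ne h]

lemma flip_apply_ne (σ : E L → Fin 2) {e f : E L} (h : f ≠ e) : flip L σ e f = σ f := by
  simp [flip, Function.update_of_ne h]

lemma flip_comm (σ : E L → Fin 2) (e f : E L) :
    flip L (flip L σ e) f = flip L (flip L σ f) e := by
  by_cases h : e = f
  · subst h; rfl
  · unfold flip
    rw [Function.update_of_ne h, Function.update_of_ne (Ne.symm h),
      Function.update_comm (Ne.symm h)]

lemma Xop_mul_apply (e : E L) (M : Op L) (σ τ : E L → Fin 2) :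
    (Xop L e * M) σ τ = M (flip L σ e) τ := by
  rw [Matrix.mul_apply, Xop_eq]
  simp

lemma mul_Xop_apply (e : E L) (M : Op L) (σ τ : E L → Fin 2) :
    (M * Xop L e) σ τ = M σ (flip L τ e) := by
  rw [Matrix.mul_apply]
  have : ∀ μ, Xop L e μ τ = if μ = flip L τ e then 1 else 0 := by
    intro μ
    rw [Xop_eq]
    simp only
    congr 1
    simp only [eq_iff_iff]
    constructor
    · intro h; rw [h, flip_flip]
    · intro h; rw [h, flip_flip]
  simp [this]

lemma Xop_mul_Xop (e f : E L) : Xop L e * Xop L f = Xop L f * Xop L e := by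
  ext σ τ
  simp only [Xop_mul_apply]
  simp only [Xop_eq]
  rw [flip_comm]

lemma Xop_sq (e : E L) : Xop L e * Xop L e = 1 := by
  ext σ τ
  rw [Xop_mul_apply, Xop_eq]
  simp only [flip_flip, Matrix.one_apply]
  by_cases h : τ = σ
  · simp [h]
  · simp [h, Ne.symm h]

lemma Zop_sq (e : E L) : Zop L e * Zop L e = 1 := by
  rw [Zop, Matrix.diagonal_mul_diagonal]
  have h : ∀ σ : E L → Fin 2, (-1 : ℂ) ^ (σ e : ℕ) * (-1) ^ (σ e : ℕ) = 1 := fun σ => by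
    rw [← pow_add, ← two_mul, pow_mul]; norm_num
  simp only [h, Matrix.diagonal_one]

lemma Zop_mul_Zop (e f : E L) : Zop L e * Zop L f = Zop L f * Zop L e := by
  ext σ τ
  by_cases h : σ = τ <;>
    simp [Zop, Matrix.diagonal_mul_diagonal, Matrix.diagonal_apply, h, mul_comm]

lemma neg_one_pow_one_sub (x : Fin 2) :
    ((-1 : ℂ)) ^ ((1 - x : Fin 2) : ℕ) = -((-1) ^ (x : ℕ)) := by
  fin_cases x <;> norm_num

lemma Xop_mul_Zop (e f : E L) :
    Xop L e * Zop L f = (if e = f then (-1 : ℂ) else 1) • (Zop L f * Xop L e) := by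
  ext σ τ
  rw [Zop, Matrix.smul_apply, Matrix.mul_diagonal, Matrix.diagonal_mul, Xop_eq]
  simp only
  by_cases hτ : τ = flip L σ e
  · subst hτ
    simp only [if_pos rfl, one_mul, mul_one]
    by_cases hef : e = f
    · subst hef
      rw [if_pos rfl]
      have h1 : flip L σ e e = 1 - σ e := by simp [flip]
      rw [h1, neg_one_pow_one_sub, smul_eq_mul]
      ring
    · rw [if_neg hef, flip_apply_ne L σ (fun h => hef h.symm)]
      simp [mul_comm]
  · simp [if_neg hτ]

lemma Zop_mul_Xop (e f : E L) :
    Zop L f * Xop L e = (if e = f then (-1 : ℂ) else 1) • (Xop L e * Zop L f) := by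
  rw [Xop_mul_Zop, smul_smul]
  by_cases h : e = f <;> simp [h]

lemma swap_mul {A B C : Op L} {s t : ℂ} (hB : A * B = s • (B * A)) (hC : A * C = t • (C * A)) :
    A * (B * C) = (s * t) • (B * C * A) := by
  rw [← mul_assoc A B C, hB, smul_mul_assoc, mul_assoc B A C, hC, mul_smul_comm, smul_smul,
    ← mul_assoc B C A]

lemma swap4 {A B1 B2 B3 B4 : Op L} {s1 s2 s3 s4 : ℂ}
    (h1 : A * B1 = s1 • (B1 * A)) (h2 : A * B2 = s2 • (B2 * A))
    (h3 : A * B3 = s3 • (B3 * A)) (h4 : A * B4 = s4 • (B4 * A)) :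
    A * (B1 * B2 * B3 * B4) = (s1 * s2 * s3 * s4) • (B1 * B2 * B3 * B4 * A) :=
  swap_mul L (swap_mul L (swap_mul L h1 h2) h3) h4

lemma fin01 : ((0 : Fin 2) = 1) = False := by simp

lemma Xop0_mul_Sp (w v : V L) :
    Xop L (w, 0) * Sp L v =
      ((if w = v then (-1 : ℂ) else 1) * 1 * 1 * (if w = v + (0, 1) then (-1 : ℂ) else 1)) •
        (Sp L v * Xop L (w, 0)) := by
  refine swap4 L ?_ ?_ ?_ ?_
  · rw [Xop_mul_Zop]; congr 1; simp [Prod.ext_iff]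
  · rw [Xop_mul_Zop]; congr 1; simp [Prod.ext_iff]
  · rw [Xop_mul_Zop]; congr 1; simp [Prod.ext_iff]
  · rw [Xop_mul_Zop]; congr 1; simp [Prod.ext_iff]

lemma Xop1_mul_Sp (w v : V L) :
    Xop L (w, 1) * Sp L v =
      (1 * (if w = v then (-1 : ℂ) else 1) * (if w = v + (1, 0) then (-1 : ℂ) else 1) * 1) •
        (Sp L v * Xop L (w, 1)) := by
  refine swap4 L ?_ ?_ ?_ ?_
  · rw [Xop_mul_Zop]; congr 1; simp [Prod.ext_iff]
  · rw [Xop_mul_Zop]; congr 1; simp [Prod.ext_iff]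
  · rw [Xop_mul_Zop]; congr 1; simp [Prod.ext_iff]
  · rw [Xop_mul_Zop]; congr 1; simp [Prod.ext_iff]

lemma Zop0_mul_Sv (w v : V L) :
    Zop L (w, 0) * Sv L v =
      ((if w = v then (-1 : ℂ) else 1) * 1 * (if w = v - (1, 0) then (-1 : ℂ) else 1) * 1) •
        (Sv L v * Zop L (w, 0)) := by
  refine swap4 L ?_ ?_ ?_ ?_
  · rw [Zop_mul_Xop]; congr 1; simp [Prod.ext_iff, eq_comm]
  · rw [Zop_mul_Xop]; congr 1; simp [Prod.ext_iff, eq_comm]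
  · rw [Zop_mul_Xop]; congr 1; simp [Prod.ext_iff, eq_comm]
  · rw [Zop_mul_Xop]; congr 1; simp [Prod.ext_iff, eq_comm]

lemma Zop1_mul_Sv (w v : V L) :
    Zop L (w, 1) * Sv L v =
      (1 * (if w = v then (-1 : ℂ) else 1) * 1 * (if w = v - (0, 1) then (-1 : ℂ) else 1)) •
        (Sv L v * Zop L (w, 1)) := by
  refine swap4 L ?_ ?_ ?_ ?_
  · rw [Zop_mul_Xop]; congr 1; simp [Prod.ext_iff, eq_comm]
  · rw [Zop_mul_Xop]; congr 1; simp [Prod.ext_iff, eq_comm]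
  · rw [Zop_mul_Xop]; congr 1; simp [Prod.ext_iff, eq_comm]
  · rw [Zop_mul_Xop]; congr 1; simp [Prod.ext_iff, eq_comm]

lemma Xop_mul_Sv (a : E L) (v : V L) : Xop L a * Sv L v = Sv L v * Xop L a := by
  have h : Xop L a * Sv L v = ((1 : ℂ) * 1 * 1 * 1) • (Sv L v * Xop L a) := by
    refine swap4 L ?_ ?_ ?_ ?_ <;> rw [one_smul, Xop_mul_Xop]
  simpa using h

lemma Zop_mul_Sp (a : E L) (v : V L) : Zop L a * Sp L v = Sp L v * Zop L a := by
  have h : Zop L a * Sp L v = ((1 : ℂ) * 1 * 1 * 1) • (Sp L v * Zop L a) := by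
    refine swap4 L ?_ ?_ ?_ ?_ <;> rw [one_smul, Zop_mul_Zop]
  simpa using h

lemma isUnit_Xop (e : E L) : IsUnit (Xop L e) := ⟨⟨_, _, Xop_sq L e, Xop_sq L e⟩, rfl⟩

lemma isUnit_Zop (e : E L) : IsUnit (Zop L e) := ⟨⟨_, _, Zop_sq L e, Zop_sq L e⟩, rfl⟩

lemma isUnit_Sv (v : V L) : IsUnit (Sv L v) :=
  (((isUnit_Xop L _).mul (isUnit_Xop L _)).mul (isUnit_Xop L _)).mul (isUnit_Xop L _)

lemma isUnit_Sp (v : V L) : IsUnit (Sp L v) :=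
  (((isUnit_Zop L _).mul (isUnit_Zop L _)).mul (isUnit_Zop L _)).mul (isUnit_Zop L _)

lemma isUnit_stab (j : Gen L) : IsUnit (stab L j) := by
  rcases j with v | v
  · exact isUnit_Sv L v
  · exact isUnit_Sp L v

lemma smul_cancel {M : Op L} (hM : M ≠ 0) {s t : ℂ} (h : s • M = t • M) : s = t := by
  have h0 : (s - t) • M = 0 := by rw [sub_smul, h, sub_self]
  rcases smul_eq_zero.mp h0 with h' | h'
  · exact sub_eq_zero.mp h'
  · exact absurd h' hM

lemma anticomm_iff_of_swap {C S : Op L} {s : ℂ} (hS : IsUnit S) (hC : IsUnit C)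
    (hs : C * S = s • (S * C)) : (C * S = -(S * C)) ↔ s = -1 := by
  have hM : S * C ≠ 0 := (hS.mul hC).ne_zero
  constructor
  · intro h
    refine smul_cancel L hM (s := s) (t := -1) ?_
    rw [← hs, h, neg_one_smul]
  · intro h
    rw [hs, h, neg_one_smul]

lemma not_anticomm_of_comm {C S : Op L} (hS : IsUnit S) (hC : IsUnit C) (h : C * S = S * C) :
    ¬(C * S = -(S * C)) := fun h' => by
  have := (anticomm_iff_of_swap L hS hC (by rw [h, one_smul])).mp h'
  norm_num at this

lemma ne_neg_self {S : Op L} (hS : IsUnit S) : S ≠ -S := by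
  intro h
  have h2 : (2 : ℂ) • S = 0 := by
    rw [two_smul]; nth_rewrite 1 [h]; rw [neg_add_cancel]
  rcases smul_eq_zero.mp h2 with h' | h'
  · norm_num at h'
  · exact hS.ne_zero h'

lemma ite_sign {P Q : Prop} [Decidable P] [Decidable Q] (h : ¬(P ∧ Q)) :
    ((if P then (-1 : ℂ) else 1) * (if Q then (-1 : ℂ) else 1) = -1) ↔ (P ∨ Q) := by
  by_cases p : P
  · by_cases q : Q
    · exact absurd ⟨p, q⟩ h
    · simp [p, q]
  · by_cases q : Q <;> simp [p, q] <;> norm_num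

lemma antiX0 (h1 : (1 : ZMod L) ≠ 0) (w : V L) (i : Gen L) :
    Xop L (w, 0) * stab L i = -(stab L i * Xop L (w, 0)) ↔
      i = Sum.inr w ∨ i = Sum.inr (w - (0, 1)) := by
  rcases i with v | v
  · constructor
    · intro h
      exact absurd h (not_anticomm_of_comm L (isUnit_Sv L v) (isUnit_Xop L _)
        (Xop_mul_Sv L _ v))
    · rintro (h | h) <;> simp at h
  · have hboth : ¬(w = v ∧ w = v + (0, 1)) := by
      rintro ⟨rfl, h⟩
      have h2 : w.2 = w.2 + 1 := congrArg Prod.snd h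
      exact h1 (by linear_combination -h2)
    have key := anticomm_iff_of_swap L (isUnit_Sp L v) (isUnit_Xop L _) (Xop0_mul_Sp L w v)
    have hstab : stab L (Sum.inr v) = Sp L v := rfl
    rw [hstab, key, mul_one, mul_one, ite_sign hboth]
    constructor
    · rintro (h | h)
      · exact Or.inl (by rw [h])
      · exact Or.inr (by rw [h]; congr 1; abel)
    · rintro (h | h)
      · exact Or.inl (by injection h with h; rw [h])
      · injection h with h
        exact Or.inr (by rw [h]; abel)

lemma antiX1 (h1 : (1 : ZMod L) ≠ 0) (w : V L) (i : Gen L) :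
    Xop L (w, 1) * stab L i = -(stab L i * Xop L (w, 1)) ↔
      i = Sum.inr w ∨ i = Sum.inr (w - (1, 0)) := by
  rcases i with v | v
  · constructor
    · intro h
      exact absurd h (not_anticomm_of_comm L (isUnit_Sv L v) (isUnit_Xop L _)
        (Xop_mul_Sv L _ v))
    · rintro (h | h) <;> simp at h
  · have hboth : ¬(w = v ∧ w = v + (1, 0)) := by
      rintro ⟨rfl, h⟩
      have h2 : w.1 = w.1 + 1 := congrArg Prod.fst h
      exact h1 (by linear_combination -h2)
    have key := anticomm_iff_of_swap L (isUnit_Sp L v) (isUnit_Xop L _) (Xop1_mul_Sp L w v)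
    have hstab : stab L (Sum.inr v) = Sp L v := rfl
    rw [hstab, key, mul_one, one_mul, ite_sign hboth]
    constructor
    · rintro (h | h)
      · exact Or.inl (by rw [h])
      · exact Or.inr (by rw [h]; congr 1; abel)
    · rintro (h | h)
      · exact Or.inl (by injection h with h; rw [h])
      · injection h with h
        exact Or.inr (by rw [h]; abel)

lemma antiZ0 (h1 : (1 : ZMod L) ≠ 0) (w : V L) (i : Gen L) :
    Zop L (w, 0) * stab L i = -(stab L i * Zop L (w, 0)) ↔
      i = Sum.inl w ∨ i = Sum.inl (w + (1, 0)) := by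
  rcases i with v | v
  swap
  · constructor
    · intro h
      exact absurd h (not_anticomm_of_comm L (isUnit_Sp L v) (isUnit_Zop L _)
        (Zop_mul_Sp L _ v))
    · rintro (h | h) <;> simp at h
  · have hboth : ¬(w = v ∧ w = v - (1, 0)) := by
      rintro ⟨rfl, h⟩
      have h2 : w.1 = w.1 - 1 := congrArg Prod.fst h
      exact h1 (by linear_combination h2)
    have key := anticomm_iff_of_swap L (isUnit_Sv L v) (isUnit_Zop L _) (Zop0_mul_Sv L w v)
    have hstab : stab L (Sum.inl v) = Sv L v := rfl
    rw [hstab, key, mul_one, mul_one, ite_sign hboth]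
    constructor
    · rintro (h | h)
      · exact Or.inl (by rw [h])
      · exact Or.inr (by rw [h]; congr 1; abel)
    · rintro (h | h)
      · exact Or.inl (by injection h with h; rw [h])
      · injection h with h
        exact Or.inr (by rw [h]; abel)

lemma antiZ1 (h1 : (1 : ZMod L) ≠ 0) (w : V L) (i : Gen L) :
    Zop L (w, 1) * stab L i = -(stab L i * Zop L (w, 1)) ↔
      i = Sum.inl w ∨ i = Sum.inl (w + (0, 1)) := by
  rcases i with v | v
  swap
  · constructor
    · intro h
      exact absurd h (not_anticomm_of_comm L (isUnit_Sp L v) (isUnit_Zop L _)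
        (Zop_mul_Sp L _ v))
    · rintro (h | h) <;> simp at h
  · have hboth : ¬(w = v ∧ w = v - (0, 1)) := by
      rintro ⟨rfl, h⟩
      have h2 : w.2 = w.2 - 1 := congrArg Prod.snd h
      exact h1 (by linear_combination h2)
    have key := anticomm_iff_of_swap L (isUnit_Sv L v) (isUnit_Zop L _) (Zop1_mul_Sv L w v)
    have hstab : stab L (Sum.inl v) = Sv L v := rfl
    rw [hstab, key, one_mul, mul_one, ite_sign hboth]
    constructor
    · rintro (h | h)
      · exact Or.inl (by rw [h])
      · exact Or.inr (by rw [h]; congr 1; abel)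
    · rintro (h | h)
      · exact Or.inl (by injection h with h; rw [h])
      · injection h with h
        exact Or.inr (by rw [h]; abel)

lemma val_sub_one {z : ZMod L} (hz : z ≠ 0) : ((z - 1).val : ℤ) + 1 = (z.val : ℤ) := by
  have hv : z.val ≠ 0 := fun h => hz ((ZMod.val_eq_zero z).mp h)
  have hlt : z.val < L := ZMod.val_lt z
  have h2 : z - 1 = ((z.val - 1 : ℕ) : ZMod L) := by
    have hz' : ((z.val : ℕ) : ZMod L) = z := by
      rw [ZMod.natCast_val, ZMod.cast_id]
    rw [Nat.cast_sub (Nat.one_le_iff_ne_zero.mpr hv), hz', Nat.cast_one]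
  rw [h2, ZMod.val_natCast, Nat.mod_eq_of_lt (by omega)]
  push_cast
  omega

end Aux

end Toric

open Toric in
/-- (a) each non-starred correction anticommutes with its own stabilizer;
(b) if `C_k` anticommutes with `S_j` (for non-starred `k ≠ j`) then `f(k) ≥ f(j) + 1`;
(c) each correction `C_k` anticommutes with at most one stabilizer `S_j`, `j ≠ k`
(i.e. `m = 1` for the toric code). -/
theorem toric_code_excitation_transport
    (L : ℕ) [NeZero L] (hL : 2 ≤ L) :
    (∀ j : Gen L, j ≠ pStar L → j ≠ vStar L →
      corr L j * stab L j = -(stab L j * corr L j)) ∧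
    (∀ j k : Gen L, j ≠ pStar L → j ≠ vStar L → k ≠ pStar L → k ≠ vStar L → k ≠ j →
      corr L k * stab L j = -(stab L j * corr L k) → axf L j + 1 ≤ axf L k) ∧
    (∀ k j j' : Gen L, j ≠ k → j' ≠ k →
      corr L k * stab L j = -(stab L j * corr L k) →
      corr L k * stab L j' = -(stab L j' * corr L k) → j = j') := by
  have h1 : (1 : ZMod L) ≠ 0 := by
    haveI : Fact (1 < L) := ⟨hL⟩
    exact one_ne_zero
  refine ⟨?_, ?_, ?_⟩
  · -- (a)
    rintro (⟨r, s⟩ | ⟨r, s⟩) hp hv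
    · have hrs : ¬((r, s) = ((1 : ZMod L), (1 : ZMod L))) := fun h => hv (by simp [vStar, h])
      by_cases hs : s = 1
      · subst hs
        have hr : r ≠ 1 := fun h => hrs (by rw [h])
        have hc : corr L (Sum.inl (r, 1)) = Zop L ((r - 1, 1), 0) := by simp [corr, hr]
        rw [hc]
        refine (antiZ0 L h1 (r - 1, 1) (Sum.inl (r, 1))).mpr (Or.inr ?_)
        congr 1
        simp [Prod.ext_iff]
      · have hc : corr L (Sum.inl (r, s)) = Zop L ((r, s - 1), 1) := by simp [corr, hrs, hs]
        rw [hc]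
        refine (antiZ1 L h1 (r, s - 1) (Sum.inl (r, s))).mpr (Or.inr ?_)
        congr 1
        simp [Prod.ext_iff]
    · have hrs : ¬((r, s) = ((0 : ZMod L), (0 : ZMod L))) := fun h => hp (by simp [pStar, h])
      by_cases hs : s = 0
      · subst hs
        have hr : r ≠ 0 := fun h => hrs (by rw [h])
        have hc : corr L (Sum.inr (r, 0)) = Xop L ((r + 1, 0), 1) := by simp [corr, hr]
        rw [hc]
        refine (antiX1 L h1 (r + 1, 0) (Sum.inr (r, 0))).mpr (Or.inr ?_)
        congr 1
        simp [Prod.ext_iff]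
      · have hc : corr L (Sum.inr (r, s)) = Xop L ((r, s + 1), 0) := by simp [corr, hrs, hs]
        rw [hc]
        refine (antiX0 L h1 (r, s + 1) (Sum.inr (r, s))).mpr (Or.inr ?_)
        congr 1
        simp [Prod.ext_iff]
  · -- (b)
    rintro j (⟨r, s⟩ | ⟨r, s⟩) hjp hjv hkp hkv hkj hanti
    · have hrs : ¬((r, s) = ((1 : ZMod L), (1 : ZMod L))) := fun h => hkv (by simp [vStar, h])
      by_cases hs : s = 1
      · subst hs
        have hr : r ≠ 1 := fun h => hrs (by rw [h])
        have hc : corr L (Sum.inl (r, 1)) = Zop L ((r - 1, 1), 0) := by simp [corr, hr]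
        rw [hc] at hanti
        rcases (antiZ0 L h1 (r - 1, 1) j).mp hanti with h | h
        · subst h
          have hv1 := val_sub_one L (z := r - 1) (sub_ne_zero.mpr hr)
          simp only [axf, sub_self, ZMod.val_zero, Nat.cast_zero]
          linarith [hv1]
        · exfalso; apply hkj; rw [h]; congr 1; simp [Prod.ext_iff]
      · have hc : corr L (Sum.inl (r, s)) = Zop L ((r, s - 1), 1) := by simp [corr, hrs, hs]
        rw [hc] at hanti
        rcases (antiZ1 L h1 (r, s - 1) j).mp hanti with h | h
        · subst h
          have hv1 := val_sub_one L (z := s - 1) (sub_ne_zero.mpr hs)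
          simp only [axf]
          linarith [hv1]
        · exfalso; apply hkj; rw [h]; congr 1; simp [Prod.ext_iff]
    · have hrs : ¬((r, s) = ((0 : ZMod L), (0 : ZMod L))) := fun h => hkp (by simp [pStar, h])
      by_cases hs : s = 0
      · subst hs
        have hr : r ≠ 0 := fun h => hrs (by rw [h])
        have hc : corr L (Sum.inr (r, 0)) = Xop L ((r + 1, 0), 1) := by simp [corr, hr]
        rw [hc] at hanti
        rcases (antiX1 L h1 (r + 1, 0) j).mp hanti with h | h
        · subst h
          have hv1 := val_sub_one L (z := -r) (neg_ne_zero.mpr hr)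
          have he : -(r + 1) = -r - 1 := by ring
          simp only [axf, he, neg_zero, ZMod.val_zero, Nat.cast_zero]
          linarith [hv1]
        · exfalso; apply hkj; rw [h]; congr 1; simp [Prod.ext_iff]
      · have hc : corr L (Sum.inr (r, s)) = Xop L ((r, s + 1), 0) := by simp [corr, hrs, hs]
        rw [hc] at hanti
        rcases (antiX0 L h1 (r, s + 1) j).mp hanti with h | h
        · subst h
          have hv1 := val_sub_one L (z := -s) (neg_ne_zero.mpr hs)
          have he : -(s + 1) = -s - 1 := by ring
          simp only [axf, he]
          linarith [hv1]
        · exfalso; apply hkj; rw [h]; congr 1; simp [Prod.ext_iff]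
  · -- (c)
    rintro (⟨r, s⟩ | ⟨r, s⟩) j j' hjk hj'k ha ha'
    · by_cases hk : (r, s) = ((1 : ZMod L), (1 : ZMod L))
      · have hc : corr L (Sum.inl (r, s)) = 1 := by simp [corr, hk]
        rw [hc, one_mul, mul_one] at ha
        exact absurd ha (ne_neg_self L (isUnit_stab L j))
      · by_cases hs : s = 1
        · subst hs
          have hr : r ≠ 1 := fun h => hk (by rw [h])
          have hc : corr L (Sum.inl (r, 1)) = Zop L ((r - 1, 1), 0) := by simp [corr, hr]
          rw [hc] at ha ha'
          have hkey : (Sum.inl ((r - 1, 1) + (1, 0)) : Gen L) = Sum.inl (r, 1) := by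
            congr 1; simp [Prod.ext_iff]
          rcases (antiZ0 L h1 (r - 1, 1) j).mp ha with h | h
          · rcases (antiZ0 L h1 (r - 1, 1) j').mp ha' with h' | h'
            · rw [h, h']
            · exact absurd (h'.trans hkey) hj'k
          · exact absurd (h.trans hkey) hjk
        · have hc : corr L (Sum.inl (r, s)) = Zop L ((r, s - 1), 1) := by simp [corr, hk, hs]
          rw [hc] at ha ha'
          have hkey : (Sum.inl ((r, s - 1) + (0, 1)) : Gen L) = Sum.inl (r, s) := by
            congr 1; simp [Prod.ext_iff]
          rcases (antiZ1 L h1 (r, s - 1) j).mp ha with h | h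
          · rcases (antiZ1 L h1 (r, s - 1) j').mp ha' with h' | h'
            · rw [h, h']
            · exact absurd (h'.trans hkey) hj'k
          · exact absurd (h.trans hkey) hjk
    · by_cases hk : (r, s) = ((0 : ZMod L), (0 : ZMod L))
      · have hc : corr L (Sum.inr (r, s)) = 1 := by simp [corr, hk]
        rw [hc, one_mul, mul_one] at ha
        exact absurd ha (ne_neg_self L (isUnit_stab L j))
      · by_cases hs : s = 0
        · subst hs
          have hr : r ≠ 0 := fun h => hk (by rw [h])
          have hc : corr L (Sum.inr (r, 0)) = Xop L ((r + 1, 0), 1) := by simp [corr, hr]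
          rw [hc] at ha ha'
          have hkey : (Sum.inr ((r + 1, 0) - (1, 0)) : Gen L) = Sum.inr (r, 0) := by
            congr 1; simp [Prod.ext_iff]
          rcases (antiX1 L h1 (r + 1, 0) j).mp ha with h | h
          · rcases (antiX1 L h1 (r + 1, 0) j').mp ha' with h' | h'
            · rw [h, h']
            · exact absurd (h'.trans hkey) hj'k
          · exact absurd (h.trans hkey) hjk
        · have hc : corr L (Sum.inr (r, s)) = Xop L ((r, s + 1), 0) := by simp [corr, hk, hs]
          rw [hc] at ha ha'
          have hkey : (Sum.inr ((r, s + 1) - (0, 1)) : Gen L) = Sum.inr (r, s) := by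
            congr 1; simp [Prod.ext_iff]
          rcases (antiX0 L h1 (r, s + 1) j).mp ha with h | h
          · rcases (antiX0 L h1 (r, s + 1) j').mp ha' with h' | h'
            · rw [h, h']
            · exact absurd (h'.trans hkey) hj'k
          · exact absurd (h.trans hkey) hjk
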